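/- Let G be a finite simple graph on n vertices with Laplacian matrix L(G) and maximum vertex degree d_max, let D be a real number with D ≥ √(8·d_max), and let 𝒜 be the 2n×2n real block matrix with blocks (-D·Iₙ, Iₙ; -L(G), 0). Then every complex eigenvalue of 𝒜 is real and nonpositive (i.e. it has zero imaginary part and nonpositive real part). -/

import Mathlib

open Matrix Complex in
theorem quad_real' {n : Type*} [Fintype n] (L : Matrix n n ℝ) (hL : L.IsSymm) (x : n → ℂ) :
    star x ⬝ᵥ ((L.map Complex.ofReal) *ᵥ x) =
      Complex.ofReal ((fun i => (x i).re) ⬝ᵥ (L *ᵥ (fun i => (x i).re))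
        + (fun i => (x i).im) ⬝ᵥ (L *ᵥ (fun i => (x i).im))) := by
  set a : n → ℝ := fun i => (x i).re with ha
  set b : n → ℝ := fun i => (x i).im with hb
  have hu : ∀ v v' : n → ℝ,
      (Complex.ofRealHom ∘ v) ⬝ᵥ ((L.map Complex.ofReal) *ᵥ (Complex.ofRealHom ∘ v'))
      = Complex.ofReal (v ⬝ᵥ (L *ᵥ v')) := by
    intro v v'
    have h2 : (L.map Complex.ofReal) *ᵥ (Complex.ofRealHom ∘ v') = Complex.ofRealHom ∘ (L *ᵥ v') := by
      funext i
      exact (RingHom.map_mulVec Complex.ofRealHom L v' i).symm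
    rw [h2, ← RingHom.map_dotProduct]
    rfl
  have hx : x = Complex.ofRealHom ∘ a + Complex.I • (Complex.ofRealHom ∘ b) := by
    funext i
    simp only [Pi.add_apply, Pi.smul_apply, Function.comp_apply, smul_eq_mul, ofRealHom_eq_coe]
    rw [mul_comm]
    exact (Complex.re_add_im (x i)).symm
  have hstar : star x = Complex.ofRealHom ∘ a - Complex.I • (Complex.ofRealHom ∘ b) := by
    funext i
    have := congrFun hx i
    simp only [Pi.add_apply, Pi.smul_apply, Function.comp_apply, smul_eq_mul,
      ofRealHom_eq_coe] at this ⊢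
    simp [Pi.star_apply, this, Complex.ext_iff]
  have hsym : (L.map Complex.ofReal)ᵀ = L.map Complex.ofReal := by
    rw [← Matrix.transpose_map]
    rw [Matrix.IsSymm] at hL
    rw [hL]
  have hcomm : (Complex.ofRealHom ∘ a) ⬝ᵥ ((L.map Complex.ofReal) *ᵥ (Complex.ofRealHom ∘ b))
      = (Complex.ofRealHom ∘ b) ⬝ᵥ ((L.map Complex.ofReal) *ᵥ (Complex.ofRealHom ∘ a)) := by
    rw [Matrix.dotProduct_mulVec]
    conv_lhs => rw [← hsym]
    rw [Matrix.vecMul_transpose, dotProduct_comm]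
  rw [hstar]
  conv_lhs => rw [hx]
  rw [Matrix.mulVec_add, Matrix.mulVec_smul, sub_dotProduct, dotProduct_add,
    dotProduct_add, smul_dotProduct, dotProduct_smul, dotProduct_smul,
    hcomm, smul_dotProduct, hu a a, hu b b]
  push_cast
  simp only [smul_eq_mul]
  ring_nf
  rw [Complex.I_sq]
  ring

open Matrix in
theorem exists_eigvec' {n : Type*} [Fintype n] [DecidableEq n] (M : Matrix n n ℂ) (lam : ℂ)
    (h : lam ∈ spectrum ℂ M) :
    ∃ v : n → ℂ, v ≠ 0 ∧ M *ᵥ v = lam • v := by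
  rw [← AlgEquiv.spectrum_eq (Matrix.toLinAlgEquiv' (n := n) (R := ℂ)),
    ← Module.End.hasEigenvalue_iff_mem_spectrum] at h
  obtain ⟨v, hv, hv0⟩ := h.exists_hasEigenvector
  rw [Module.End.mem_eigenspace_iff] at hv
  exact ⟨v, hv0, by rw [← hv, Matrix.toLinAlgEquiv'_apply]⟩

open Matrix in
theorem lap_row {n : ℕ} (G : SimpleGraph (Fin n)) [DecidableRel G.Adj] (k : Fin n) :
    (G.lapMatrix ℝ) k k = G.degree k ∧
    ∑ j ∈ Finset.univ.erase k, ‖((G.lapMatrix ℝ).map Complex.ofReal) k j‖ = G.degree k := by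
  constructor
  · simp [SimpleGraph.lapMatrix, SimpleGraph.degMatrix, SimpleGraph.adjMatrix]
  · have h1 : ∀ j ∈ Finset.univ.erase k, ‖((G.lapMatrix ℝ).map Complex.ofReal) k j‖
        = if G.Adj k j then (1:ℝ) else 0 := by
      intro j hj
      have hjk : j ≠ k := (Finset.mem_erase.mp hj).1
      simp [SimpleGraph.lapMatrix, SimpleGraph.degMatrix, SimpleGraph.adjMatrix,
        Matrix.diagonal_apply_ne' _ hjk, apply_ite]
    rw [Finset.sum_congr rfl h1]
    rw [Finset.sum_erase _ (by simp)]
    rw [Finset.sum_boole]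
    have h2 : Finset.univ.filter (G.Adj k) = G.neighborFinset k := by
      ext j; simp
    rw [h2, SimpleGraph.degree]

open Matrix Complex

theorem stmt_10 {n : ℕ} (G : SimpleGraph (Fin n)) [DecidableRel G.Adj]
    (D : ℝ) (hD : D ≥ Real.sqrt (8 * G.maxDegree)) :
    let 𝒜 : Matrix (Fin n ⊕ Fin n) (Fin n ⊕ Fin n) ℝ :=
      Matrix.fromBlocks ((-D) • 1) 1 (-(G.lapMatrix ℝ)) 0
    ∀ lam : ℂ, lam ∈ spectrum ℂ (𝒜.map Complex.ofReal) →
      lam.im = 0 ∧ lam.re ≤ 0 := by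
  intro 𝒜 lam hlam
  set L : Matrix (Fin n) (Fin n) ℝ := G.lapMatrix ℝ with hLdef
  set Lc : Matrix (Fin n) (Fin n) ℂ := L.map Complex.ofReal with hLcdef
  -- basic facts about D
  have hD0 : (0:ℝ) ≤ D := le_trans (Real.sqrt_nonneg _) hD
  have hD2 : 8 * (G.maxDegree : ℝ) ≤ D * D := by
    have h8 : (0:ℝ) ≤ 8 * G.maxDegree := by positivity
    nlinarith [Real.sq_sqrt h8, Real.sqrt_nonneg (8 * (G.maxDegree:ℝ))]
  -- rewrite the matrix as complex blocks
  have e1 : (((-D) • 1 : Matrix (Fin n) (Fin n) ℝ)).map Complex.ofReal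
      = ((-(D:ℂ)) • 1 : Matrix (Fin n) (Fin n) ℂ) := by
    ext i j
    by_cases h : i = j <;> simp [Matrix.map_apply, Matrix.one_apply, h]
  have e2 : ((1 : Matrix (Fin n) (Fin n) ℝ)).map Complex.ofReal = 1 := by
    ext i j
    simp [Matrix.map_apply, Matrix.one_apply, apply_ite]
  have e3 : (-L).map Complex.ofReal = -Lc := by
    ext i j
    simp [hLcdef, Matrix.map_apply]
  have e4 : ((0 : Matrix (Fin n) (Fin n) ℝ)).map Complex.ofReal = 0 := by
    ext i j
    simp [Matrix.map_apply]
  have hA : 𝒜.map Complex.ofReal =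
      Matrix.fromBlocks ((-(D:ℂ)) • 1) 1 (-Lc) 0 := by
    simp only [𝒜, Matrix.fromBlocks_map, e1, e2, ← hLdef, e3, e4]
  rw [hA] at hlam
  obtain ⟨v, hv0, hv⟩ := exists_eigvec' _ lam hlam
  set x : Fin n → ℂ := v ∘ Sum.inl with hxdef
  set y : Fin n → ℂ := v ∘ Sum.inr with hydef
  have hvelim : v = Sum.elim x y := (Sum.elim_comp_inl_inr v).symm
  rw [hvelim, Matrix.fromBlocks_mulVec, Sum.elim_comp_inl, Sum.elim_comp_inr] at hv
  have h1 : (-(D:ℂ)) • x + y = lam • x := by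
    funext i
    have h := congrFun hv (Sum.inl i)
    simpa [Matrix.neg_mulVec, Matrix.smul_mulVec, Matrix.one_mulVec] using h
  have h2 : -(Lc *ᵥ x) = lam • y := by
    funext i
    have h := congrFun hv (Sum.inr i)
    simpa [Matrix.neg_mulVec, Matrix.zero_mulVec, Matrix.mulVec_zero] using h
  have hy : y = lam • x + (D:ℂ) • x := by
    funext i
    have := congrFun h1 i
    simp only [Pi.add_apply, Pi.smul_apply, smul_eq_mul, Pi.neg_apply] at this ⊢
    linear_combination this
  have hx0 : x ≠ 0 := by
    intro hx
    apply hv0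
    rw [hvelim, hx, hy, hx]
    funext i
    cases i <;> simp
  set μ : ℂ := -(lam * (lam + (D:ℂ))) with hμdef
  have hLx : Lc *ᵥ x = μ • x := by
    funext i
    have h2i := congrFun h2 i
    have hyi := congrFun hy i
    simp only [Pi.neg_apply, Pi.smul_apply, smul_eq_mul, Pi.add_apply] at h2i hyi ⊢
    rw [hyi] at h2i
    simp only [hμdef]
    linear_combination -h2i
  -- μ is a nonnegative real
  set a : Fin n → ℝ := fun i => (x i).re with hadef
  set b : Fin n → ℝ := fun i => (x i).im with hbdef
  set q : ℝ := a ⬝ᵥ (L *ᵥ a) + b ⬝ᵥ (L *ᵥ b) with hqdef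
  set c : ℝ := ∑ i, Complex.normSq (x i) with hcdef
  have hq0 : 0 ≤ q := by
    have hps := SimpleGraph.posSemidef_lapMatrix ℝ G
    have h1 := hps.dotProduct_mulVec_nonneg a
    have h2 := hps.dotProduct_mulVec_nonneg b
    simp only [star_trivial] at h1 h2
    exact add_nonneg h1 h2
  have hc0 : 0 < c := by
    have hex : ∃ i, x i ≠ 0 := by
      by_contra h
      push_neg at h
      exact hx0 (funext h)
    obtain ⟨i, hi⟩ := hex
    refine Finset.sum_pos' (fun j _ => Complex.normSq_nonneg _) ⟨i, Finset.mem_univ i, ?_⟩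
    exact Complex.normSq_pos.mpr hi
  have hdot : star x ⬝ᵥ x = (c : ℂ) := by
    simp only [hcdef, dotProduct, Pi.star_apply, Complex.ofReal_sum]
    refine Finset.sum_congr rfl fun i _ => ?_
    rw [Complex.star_def, Complex.normSq_eq_conj_mul_self]
  have hquad : (μ : ℂ) * (c : ℂ) = (q : ℂ) := by
    have hq := quad_real' L (G.isSymm_lapMatrix (R := ℝ)) x
    rw [hLx] at hq
    rw [dotProduct_smul, hdot] at hq
    simpa only [smul_eq_mul, hqdef, Complex.ofReal_add] using hq
  set m : ℝ := q / c with hmdef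
  have hμm : μ = (m : ℂ) := by
    have hcne : (c : ℂ) ≠ 0 := by exact_mod_cast ne_of_gt hc0
    rw [hmdef, Complex.ofReal_div, eq_div_iff hcne]
    exact hquad
  have hm0 : 0 ≤ m := div_nonneg hq0 (le_of_lt hc0)
  -- Gershgorin bound: m ≤ 2 * maxDegree
  have hmax : m ≤ 2 * G.maxDegree := by
    have hev : Module.End.HasEigenvalue (Matrix.toLin' Lc) μ := by
      apply Module.End.hasEigenvalue_of_hasEigenvector (x := x)
      exact ⟨Module.End.mem_eigenspace_iff.mpr (by rw [Matrix.toLin'_apply, hLx]), hx0⟩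
    obtain ⟨k, hk⟩ := eigenvalue_mem_ball hev
    obtain ⟨hdiag, hsum⟩ := lap_row G k
    rw [Metric.mem_closedBall] at hk
    have hLckk : Lc k k = ((G.degree k : ℝ) : ℂ) := by
      simp only [hLcdef, Matrix.map_apply]
      rw [hLdef, hdiag]
    rw [hLckk, hsum, hμm, Complex.isometry_ofReal.dist_eq] at hk
    have : m ≤ 2 * G.degree k := by
      rw [Real.dist_eq, abs_le] at hk
      linarith [hk.2]
    calc m ≤ 2 * G.degree k := this
      _ ≤ 2 * G.maxDegree := by
          have := G.degree_le_maxDegree k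
          exact_mod_cast by exact mul_le_mul_of_nonneg_left (by exact_mod_cast this) (by norm_num)
  -- now final algebra
  have hm4 : 4 * m ≤ D * D := by linarith
  have heq : -(lam * (lam + (D:ℂ))) = (m : ℂ) := by rw [← hμdef, hμm]
  have hre : lam.im * lam.im - lam.re * (lam.re + D) = m := by
    have h := congrArg Complex.re heq
    simpa [Complex.mul_re, Complex.add_re, Complex.add_im] using h
  have him : -(lam.im * (lam.re + D)) + -(lam.re * lam.im) = 0 := by
    have h := congrArg Complex.im heq
    simpa [Complex.mul_im, Complex.add_re, Complex.add_im] using h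
  have hb : lam.im = 0 := by
    rcases mul_eq_zero.mp (show lam.im * (2 * lam.re + D) = 0 by linear_combination -him)
      with h | h
    · exact h
    · have hsq : lam.im * lam.im ≤ 0 := by nlinarith [hre, hm4, h]
      exact mul_self_eq_zero.mp (le_antisymm hsq (mul_self_nonneg _))
  refine ⟨hb, ?_⟩
  by_contra hpos
  push_neg at hpos
  nlinarith [hre, hb, hm0, hD0]
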